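/- arXiv:2309.03656 — 6 statements merged into one kernel-verified Lean document; each statement's English description precedes it below -/
import Mathlib

section
/- Let r be an odd positive integer, s an odd integer coprime to r with 0 < s < r, and q = exp(iπs/r). Define the quantum integer [n] = (q^n - q^{-n})/(q - q^{-1}) for 1 ≤ n ≤ r-1. Then the sign of [n] equals (-1)^⌊ns/r⌋. -/
/-- for `q = exp(iπs/r)` with `r, s` odd coprime, `0 < s < r`, the quantum
integer `[n] = (q^n - q^{-n})/(q - q^{-1})` is real and its sign is `(-1)^⌊ns/r⌋`. -/
theorem stmt0 (r s : ℕ) (hr : Odd r) (hs : Odd s) (hco : Nat.Coprime s r)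
    (hs0 : 0 < s) (hsr : s < r)
    (q : ℂ) (hq : q = Complex.exp (Complex.I * Real.pi * s / r))
    (n : ℕ) (hn1 : 1 ≤ n) (hn2 : n ≤ r - 1) :
    ((q ^ n - q⁻¹ ^ n) / (q - q⁻¹)).im = 0 ∧
      Real.sign (((q ^ n - q⁻¹ ^ n) / (q - q⁻¹)).re) = (-1) ^ ((n * s) / r) := by
  have hr0 : 0 < r := lt_trans hs0 hsr
  have hrR : (0:ℝ) < r := by exact_mod_cast hr0
  set θ : ℝ := Real.pi * s / r with hθ
  have hq' : q = Complex.exp (θ * Complex.I) := by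
    rw [hq, hθ]
    congr 1
    push_cast
    ring
  have key : ∀ m : ℕ, q ^ m - q⁻¹ ^ m = 2 * Complex.sin ((m * θ : ℝ)) * Complex.I := by
    intro m
    rw [hq', ← Complex.exp_neg, ← Complex.exp_nat_mul, ← Complex.exp_nat_mul,
        show (m:ℂ) * (θ*Complex.I) = ((m*θ:ℝ):ℂ)*Complex.I by push_cast; ring,
        show (m:ℂ) * -(θ*Complex.I) = (-(m*θ:ℝ):ℂ)*Complex.I by push_cast; ring,
        Complex.exp_mul_I, Complex.exp_mul_I, Complex.cos_neg, Complex.sin_neg]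
    ring
  have hθ0 : 0 < θ := by
    apply div_pos (mul_pos Real.pi_pos (by exact_mod_cast hs0)) hrR
  have hθπ : θ < Real.pi := by
    rw [hθ, div_lt_iff₀ hrR]
    have : (s:ℝ) < r := by exact_mod_cast hsr
    nlinarith [Real.pi_pos]
  have hsinθ : 0 < Real.sin θ := Real.sin_pos_of_pos_of_lt_pi hθ0 hθπ
  have hratio : (q ^ n - q⁻¹ ^ n) / (q - q⁻¹)
      = ((Real.sin (n * θ) / Real.sin θ : ℝ) : ℂ) := by
    have h1 := key n
    have h2 := key 1
    simp only [pow_one, Nat.cast_one, one_mul] at h2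
    have hsc : ((Real.sin θ : ℝ) : ℂ) ≠ 0 := by exact_mod_cast hsinθ.ne'
    rw [h1, h2]
    simp only [← Complex.ofReal_sin]
    have hd : (2:ℂ) * ((Real.sin θ : ℝ) : ℂ) * Complex.I ≠ 0 := by
      exact mul_ne_zero (mul_ne_zero two_ne_zero hsc) Complex.I_ne_zero
    rw [Complex.ofReal_div, div_eq_div_iff hd hsc]
    ring
  -- analyze sin(nθ)
  set k := (n * s) / r with hk
  set m := (n * s) % r with hm
  have hdm : n * s = r * k + m := (Nat.div_add_mod (n*s) r).symm
  have hm0 : 0 < m := by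
    rcases Nat.eq_zero_or_pos m with h | h
    · exfalso
      have hdvd : r ∣ n * s := by
        rw [hm] at h; exact Nat.dvd_of_mod_eq_zero h
      have : r ∣ n := (Nat.Coprime.dvd_of_dvd_mul_right (hco.symm)) hdvd
      have := Nat.le_of_dvd (by omega) this
      omega
    · exact h
  have hmr : m < r := by rw [hm]; exact Nat.mod_lt _ hr0
  have hnθ : (n:ℝ) * θ = Real.pi * m / r + k * Real.pi := by
    rw [hθ]
    have : (n:ℝ) * s = r * k + m := by exact_mod_cast hdm
    field_simp
    nlinarith [this]
  have hsinm : 0 < Real.sin (Real.pi * m / r) := by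
    apply Real.sin_pos_of_pos_of_lt_pi
    · apply div_pos (mul_pos Real.pi_pos (by exact_mod_cast hm0)) hrR
    · rw [div_lt_iff₀ hrR]
      have : (m:ℝ) < r := by exact_mod_cast hmr
      nlinarith [Real.pi_pos]
  have hsinn : Real.sin ((n:ℝ) * θ) = (-1)^k * Real.sin (Real.pi * m / r) := by
    rw [hnθ, Real.sin_add_nat_mul_pi]
  constructor
  · rw [hratio]; exact Complex.ofReal_im _
  · rw [hratio]
    simp only [Complex.ofReal_re]
    rw [hsinn]
    rcases Nat.even_or_odd k with hk2 | hk2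
    · rw [hk2.neg_one_pow]
      apply Real.sign_of_pos
      positivity
    · rw [hk2.neg_one_pow]
      have : (-1:ℝ) * Real.sin (Real.pi * m / r) / Real.sin θ < 0 :=
        div_neg_of_neg_of_pos (by linarith) hsinθ
      exact Real.sign_of_neg this
end

section
/- Let r be odd, s odd coprime to r with 0 < s < r, ε_n = (-1)^⌊ns/r⌋, and let P_n be defined by P_0 = 1, P_1 = X, P_{n+1} = XP_n + ε_n ε_{n+1} P_{n-1}. Let R(x) be the Riley polynomial of the two-bridge knot K(r,s), i.e. the upper-left entry of the matrix product [[1,1],[0,1]]^{ε_1} [[1,0],[x,1]]^{ε_2} [[1,1],[0,1]]^{ε_3} ⋯ [[1,0],[x,1]]^{ε_{r-1}} over ℚ[x]. Then P_{r-1}(X) = R(X^2). -/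
open Polynomial

lemma pair_div {r s k : ℕ} (hco : Nat.Coprime s r)
    (hk1 : 0 < k) (hkr : k < r) :
    (k * s) / r + ((r - k) * s) / r = s - 1 := by
  have hr0 : 0 < r := hk1.trans hkr
  have hs0 : 0 < s := by
    rcases Nat.eq_zero_or_pos s with h | h
    · exfalso; rw [h] at hco
      have : r = 1 := by simpa [Nat.Coprime] using hco.symm
      omega
    · exact h
  set q := k * s / r with hq
  set t := k * s % r with ht
  set q' := (r - k) * s / r with hq'
  set t' := (r - k) * s % r with ht'
  have e1 : r * q + t = k * s := Nat.div_add_mod _ _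
  have e2 : r * q' + t' = (r - k) * s := Nat.div_add_mod _ _
  have htr : t < r := Nat.mod_lt _ hr0
  have ht'r : t' < r := Nat.mod_lt _ hr0
  have ht0 : 0 < t := by
    rcases Nat.eq_zero_or_pos t with h | h
    · exfalso
      have hdvd : r ∣ k * s := by
        have := Nat.dvd_of_mod_eq_zero (ht ▸ h)
        exact this
      have : r ∣ k := (hco.symm).dvd_of_dvd_mul_right hdvd
      have := Nat.le_of_dvd hk1 this
      omega
    · exact h
  have esum : k * s + (r - k) * s = r * s := by
    rw [← Nat.add_mul]
    congr 1
    omega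
  have key : r * (q + q') + (t + t') = r * s := by
    rw [Nat.mul_add]; linarith
  have hle : q + q' ≤ s := by
    have h1 : r * (q + q') ≤ r * s := by linarith
    exact Nat.le_of_mul_le_mul_left h1 hr0
  set d := s - (q + q') with hd
  have hsd : s = q + q' + d := by omega
  have htd : t + t' = r * d := by
    have h := key
    rw [hsd, Nat.mul_add, Nat.mul_add] at h
    linarith
  have hd1 : d = 1 := by
    rcases Nat.lt_or_ge d 2 with h | h
    · interval_cases d
      · omega
      · rfl
    · exfalso
      have : r * 2 ≤ r * d := Nat.mul_le_mul_left r h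
      linarith
  omega

lemma sigma_one {r s : ℕ} (hr : Odd r) (hs : Odd s) (hco : Nat.Coprime s r)
    (hsr : s < r) (hs0 : 0 < s) :
    ∏ k ∈ Finset.range (r - 1), ((-1 : ℤ) ^ (((k + 1) * s) / r)) = 1 := by
  have hr2 : 2 ≤ r := by omega
  set f : ℕ → ℕ := fun k => ((k + 1) * s) / r with hf
  set S := ∑ k ∈ Finset.range (r - 1), f k with hS
  have hprod : ∏ k ∈ Finset.range (r - 1), ((-1 : ℤ) ^ f k) = (-1) ^ S := by
    rw [hS, Finset.prod_pow_eq_pow_sum]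
  rw [hprod]
  have h2S : 2 * S = (r - 1) * (s - 1) := by
    have hrefl : ∑ j ∈ Finset.range (r - 1), f (r - 1 - 1 - j)
        = ∑ j ∈ Finset.range (r - 1), f j := Finset.sum_range_reflect f (r - 1)
    have : 2 * S = ∑ j ∈ Finset.range (r - 1), (f j + f (r - 1 - 1 - j)) := by
      rw [Finset.sum_add_distrib, hrefl, hS]; ring
    rw [this]
    have : ∀ j ∈ Finset.range (r - 1), f j + f (r - 1 - 1 - j) = s - 1 := by
      intro j hj
      rw [Finset.mem_range] at hj
      have h1 : r - 1 - 1 - j + 1 = r - (j + 1) := by omega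
      rw [hf]
      simp only
      rw [h1]
      exact pair_div hco (by omega) (by omega)
    rw [Finset.sum_congr rfl this, Finset.sum_const, Finset.card_range, smul_eq_mul]
  obtain ⟨a, ha⟩ : ∃ a, r - 1 = 2 * a := by
    obtain ⟨m, hm⟩ := hr; exact ⟨m, by omega⟩
  have hSa : S = a * (s - 1) := by
    have : 2 * S = 2 * (a * (s - 1)) := by rw [h2S, ha]; ring
    omega
  have heven : Even S := by
    rw [hSa]
    obtain ⟨b, hb⟩ := hs
    have : Even (s - 1) := ⟨b, by omega⟩
    exact this.mul_left a
  exact heven.neg_one_pow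

/-- with `ε_n = (-1)^⌊ns/r⌋` and `P_n` defined by the recursion
`P_{n+1} = X P_n + ε_n ε_{n+1} P_{n-1}`, `P_0 = 1`, `P_1 = X`, the polynomial `P_{r-1}`
satisfies `P_{r-1}(X) = R(X²)`, where the Riley polynomial `R` is the upper-left entry of
the product `[[1,1],[0,1]]^{ε_1} [[1,0],[x,1]]^{ε_2} ⋯ [[1,0],[x,1]]^{ε_{r-1}}`
(here `[[1,1],[0,1]]^{±1} = [[1,±1],[0,1]]` and `[[1,0],[x,1]]^{±1} = [[1,0],[±x,1]]`). -/
theorem stmt9 (r s : ℕ) (hr : Odd r) (hs : Odd s) (hco : Nat.Coprime s r)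
    (hs0 : 0 < s) (hsr : s < r)
    (ε : ℕ → ℤ) (hεdef : ∀ n, ε n = (-1) ^ ((n * s) / r))
    (P : ℕ → Polynomial ℚ) (hP0 : P 0 = 1) (hP1 : P 1 = X)
    (hrec : ∀ n, 1 ≤ n →
      P (n + 1) = X * P n + C ((ε n * ε (n + 1) : ℤ) : ℚ) * P (n - 1)) :
    P (r - 1) =
      ((((List.range (r - 1)).map (fun k =>
          if (k + 1) % 2 = 1 then
            (!![1, C ((ε (k + 1) : ℚ)); 0, 1] : Matrix (Fin 2) (Fin 2) (Polynomial ℚ))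
          else
            !![1, 0; C ((ε (k + 1) : ℚ)) * X, 1])).prod) 0 0).comp (X ^ 2) := by
  have hr2 : 2 ≤ r := by omega
  set f : ℕ → Matrix (Fin 2) (Fin 2) (Polynomial ℚ) := fun k =>
    if (k + 1) % 2 = 1 then
      (!![1, C ((ε (k + 1) : ℚ)); 0, 1] : Matrix (Fin 2) (Fin 2) (Polynomial ℚ))
    else
      !![1, 0; C ((ε (k + 1) : ℚ)) * X, 1] with hfm
  set M : ℕ → Matrix (Fin 2) (Fin 2) (Polynomial ℚ) :=
    fun n => ((List.range n).map f).prod with hM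
  set σ : ℕ → ℤ := fun n => ∏ k ∈ Finset.range n, ε (k + 1) with hσ
  have hεsq : ∀ n, ε n * ε n = 1 := by
    intro n; rw [hεdef, ← pow_add]
    exact Even.neg_one_pow ⟨_, rfl⟩
  have hσs : ∀ n, σ (n + 1) = σ n * ε (n + 1) := fun n => Finset.prod_range_succ _ n
  have hMs : ∀ n, M (n + 1) = M n * f n := by
    intro n
    simp [hM, List.range_succ]
  -- the core algebraic identity
  have core : ∀ m, C ((σ m : ℚ)) * P m
      + C ((ε (m + 2) : ℚ)) * X * (C ((σ (m + 1) : ℚ)) * P (m + 1))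
      = C ((σ (m + 2) : ℚ)) * P (m + 2) := by
    intro m
    have hz2 : σ (m + 2) * (ε (m + 1) * ε (m + 2)) = σ m := by
      rw [hσs, hσs]
      have h1 := hεsq (m + 1); have h2 := hεsq (m + 2)
      linear_combination (σ m * (ε (m + 2) * ε (m + 2))) * h1 + σ m * h2
    have hc1 : C ((σ (m + 2) : ℚ)) = C ((σ (m + 1) : ℚ)) * C ((ε (m + 2) : ℚ)) := by
      rw [← C_mul]
      congr 1
      rw [hσs]
      push_cast
      ring
    have hc2 : C ((σ (m + 2) : ℚ)) * C (((ε (m + 1) * ε (m + 2) : ℤ) : ℚ)) = C ((σ m : ℚ)) := by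
      rw [← C_mul]
      congr 1
      push_cast
      exact_mod_cast hz2
    rw [hrec (m + 1) (by omega)]
    simp only [Nat.add_sub_cancel]
    linear_combination (-(P m : Polynomial ℚ)) * hc2 + (-(X * P (m + 1))) * hc1
  have key : ∀ n, 1 ≤ n →
      ((n % 2 = 1 → (M n 0 0).comp (X ^ 2) = C ((σ (n - 1) : ℚ)) * P (n - 1)
          ∧ X * (M n 0 1).comp (X ^ 2) = C ((σ n : ℚ)) * P n)
       ∧ (n % 2 = 0 → (M n 0 0).comp (X ^ 2) = C ((σ n : ℚ)) * P n
          ∧ X * (M n 0 1).comp (X ^ 2) = C ((σ (n - 1) : ℚ)) * P (n - 1))) := by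
    intro n
    induction n with
    | zero => omega
    | succ n ih =>
      intro _
      rcases Nat.eq_zero_or_pos n with rfl | hn
      · -- base case: n + 1 = 1
        have hM1 : M 1 = f 0 := by rw [hMs 0]; simp [hM]
        have hf0 : f 0 = !![1, C ((ε 1 : ℚ)); 0, 1] := by
          simp [hfm]
        constructor
        · intro _
          constructor
          · simp [hM1, hf0, hσ, hP0]
          · simp [hM1, hf0, hσ, hP1, Finset.prod_range_one, mul_comm]
        · intro h; omega
      · obtain ⟨m, rfl⟩ : ∃ m, n = m + 1 := ⟨n - 1, by omega⟩
        obtain ⟨ihodd, iheven⟩ := ih (by omega)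
        rcases Nat.even_or_odd (m + 1) with hpar | hpar
        · -- n = m+1 even, n+1 = m+2 odd
          obtain ⟨k, hk⟩ := hpar
          have hp0 : (m + 1) % 2 = 0 := by omega
          have hp1 : (m + 2) % 2 = 1 := by omega
          obtain ⟨ha, hb⟩ := iheven hp0
          simp only [Nat.add_sub_cancel] at ha hb ⊢
          have hfn : f (m + 1) = !![1, C ((ε (m + 2) : ℚ)); 0, 1] := by
            simp only [hfm]
            rw [if_pos hp1]
          have e00 : M (m + 2) 0 0 = M (m + 1) 0 0 := by
            rw [hMs (m + 1), hfn]
            simp [Matrix.mul_apply, Fin.sum_univ_two]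
          have e01 : M (m + 2) 0 1 = M (m + 1) 0 0 * C ((ε (m + 2) : ℚ)) + M (m + 1) 0 1 := by
            rw [hMs (m + 1), hfn]
            simp [Matrix.mul_apply, Fin.sum_univ_two]
          refine ⟨fun _ => ⟨?_, ?_⟩, fun h => by omega⟩
          · rw [e00]; exact ha
          · rw [e01]
            simp only [add_comp, mul_comp, C_comp]
            linear_combination (C ((ε (m + 2) : ℚ)) * X) * ha + hb + core m
        · -- n = m+1 odd, n+1 = m+2 even
          obtain ⟨k, hk⟩ := hpar
          have hp1 : (m + 1) % 2 = 1 := by omega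
          have hp0 : (m + 2) % 2 = 0 := by omega
          obtain ⟨ha, hb⟩ := ihodd hp1
          simp only [Nat.add_sub_cancel] at ha hb ⊢
          have hfn : f (m + 1) = !![1, 0; C ((ε (m + 2) : ℚ)) * X, 1] := by
            simp only [hfm]
            rw [if_neg (by omega)]
          have e00 : M (m + 2) 0 0 = M (m + 1) 0 0
              + M (m + 1) 0 1 * (C ((ε (m + 2) : ℚ)) * X) := by
            rw [hMs (m + 1), hfn]
            simp [Matrix.mul_apply, Fin.sum_univ_two]
          have e01 : M (m + 2) 0 1 = M (m + 1) 0 1 := by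
            rw [hMs (m + 1), hfn]
            simp [Matrix.mul_apply, Fin.sum_univ_two]
          refine ⟨fun h => by omega, fun _ => ⟨?_, ?_⟩⟩
          · rw [e00]
            simp only [add_comp, mul_comp, C_comp, X_comp]
            linear_combination ha + (C ((ε (m + 2) : ℚ)) * X) * hb + core m
          · rw [e01]; exact hb
  -- conclude
  have hp0 : (r - 1) % 2 = 0 := by obtain ⟨k, hk⟩ := hr; omega
  have hσr : σ (r - 1) = 1 := by
    rw [hσ]
    simp only
    rw [Finset.prod_congr rfl (fun k _ => hεdef (k + 1))]
    exact sigma_one hr hs hco hsr hs0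
  have := ((key (r - 1) (by omega)).2 hp0).1
  rw [hσr] at this
  simp only [Int.cast_one, map_one, one_mul] at this
  exact this.symm
end

section
/- Let r be odd, s odd coprime to r with 0 < s < r, ε_n = (-1)^⌊ns/r⌋, and P_n defined by the recursion P_{n+1} = XP_n + ε_n ε_{n+1} P_{n-1}, P_0 = 1, P_1 = X over ℚ. Then P_{r-1} has simple roots, i.e. P_{r-1} is squarefree in ℚ[X]. -/
open Polynomial

/-- The mod-2 "half" sequence: `Hs 0 = 1`, `Hs 1 = X + 1`, `Hs (k+2) = X * Hs (k+1) + Hs k`. -/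
noncomputable def Hs : ℕ → Polynomial (ZMod 2)
  | 0 => 1
  | 1 => X + 1
  | n + 2 => X * Hs (n + 1) + Hs n

lemma Hs_succ (n : ℕ) : Hs (n + 2) = X * Hs (n + 1) + Hs n := rfl

lemma two_poly : (2 : Polynomial (ZMod 2)) = 0 := by
  have h : (1 : ZMod 2) + 1 = 0 := by decide
  have : (2 : Polynomial (ZMod 2)) = C 1 + C 1 := by norm_num
  rw [this, ← C_add, h, C_0]

lemma Hs_cont (k : ℕ) : Hs (k + 2) * Hs k + Hs (k + 1) ^ 2 = X := by
  induction k with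
  | zero =>
    show (X * (X + 1) + 1) * 1 + (X + 1) ^ 2 = X
    linear_combination (X ^ 2 + X + 1 : Polynomial (ZMod 2)) * two_poly
  | succ k ih =>
    have ih' : Hs (k + 1 + 1) * Hs k + Hs (k + 1) ^ 2 = X := ih
    have e1 : Hs (k + 1 + 2) = X * Hs (k + 1 + 1) + Hs (k + 1) := rfl
    have e2 : Hs (k + 1 + 1) = X * Hs (k + 1) + Hs k := rfl
    linear_combination Hs (k + 1) * e1 + ih' + Hs (k + 1 + 1) * e2 +
      (X * Hs (k + 1) * Hs (k + 1 + 1)) * two_poly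

lemma Hs_sep (k : ℕ) : (Hs k).Separable := by
  match k with
  | 0 => exact isCoprime_one_left
  | 1 =>
    have : derivative (Hs 1) = 1 := by show derivative (X + 1) = 1; simp
    rw [Separable, this]; exact isCoprime_one_right
  | k + 2 =>
    have h := congrArg derivative (Hs_cont k)
    rw [derivative_add, derivative_mul, derivative_sq, derivative_X] at h
    have h2 : (C (2 : ZMod 2)) = 0 := by rw [show (2 : ZMod 2) = 0 by decide, C_0]
    rw [h2] at h
    simp only [zero_mul, add_zero] at h
    exact ⟨derivative (Hs k), Hs k, by linear_combination h⟩

lemma Hs_coeff0 (k : ℕ) : (Hs k).coeff 0 = 1 ∧ (Hs (k + 1)).coeff 0 = 1 := by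
  induction k with
  | zero => constructor <;> simp [Hs]
  | succ k ih =>
    refine ⟨ih.2, ?_⟩
    show (X * Hs (k + 1) + Hs k).coeff 0 = (1 : ZMod 2)
    rw [coeff_add, mul_coeff_zero, coeff_X_zero, zero_mul, zero_add, ih.1]

lemma Hs_sq (k : ℕ) : Hs k ^ 2 = (Hs k).comp (X ^ 2) ∧ Hs (k + 1) ^ 2 = (Hs (k + 1)).comp (X ^ 2) := by
  induction k with
  | zero =>
    constructor
    · show (1 : Polynomial (ZMod 2)) ^ 2 = (1 : Polynomial (ZMod 2)).comp (X ^ 2); simp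
    · show (X + 1 : Polynomial (ZMod 2)) ^ 2 = (X + 1 : Polynomial (ZMod 2)).comp (X ^ 2)
      simp only [add_comp, X_comp, one_comp]
      linear_combination (X : Polynomial (ZMod 2)) * two_poly
  | succ k ih =>
    refine ⟨ih.2, ?_⟩
    have e2 : Hs (k + 1 + 1) = X * Hs (k + 1) + Hs k := rfl
    rw [e2, add_comp, mul_comp, X_comp]
    linear_combination (X ^ 2) * ih.2 + ih.1 + (X * Hs k * Hs (k + 1)) * two_poly

/-- Integer version of the recursive sequence. -/
noncomputable def Qseq (c : ℕ → ℤ) : ℕ → Polynomial ℤ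
  | 0 => 1
  | 1 => X
  | n + 2 => X * Qseq c (n + 1) + C (c (n + 1)) * Qseq c n

lemma Qseq_monic (c : ℕ → ℤ) (n : ℕ) :
    ((Qseq c n).Monic ∧ (Qseq c n).natDegree = n) ∧
      ((Qseq c (n + 1)).Monic ∧ (Qseq c (n + 1)).natDegree = n + 1) := by
  induction n with
  | zero =>
    refine ⟨⟨monic_one, ?_⟩, monic_X, ?_⟩
    · show (1 : Polynomial ℤ).natDegree = 0; simp
    · show (X : Polynomial ℤ).natDegree = 1; simp
  | succ n ih =>
    refine ⟨ih.2, ?_⟩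
    have hp : (X * Qseq c (n + 1)).Monic := monic_X.mul ih.2.1
    have hpdeg : (X * Qseq c (n + 1)).degree = ((n + 2 : ℕ) : WithBot ℕ) := by
      rw [degree_mul, degree_X, degree_eq_natDegree ih.2.1.ne_zero, ih.2.2]
      push_cast; ring
    have hlt : (C (c (n + 1)) * Qseq c n).degree < (X * Qseq c (n + 1)).degree := by
      rw [hpdeg]
      calc (C (c (n + 1)) * Qseq c n).degree
          ≤ (C (c (n + 1))).degree + (Qseq c n).degree := degree_mul_le _ _
        _ ≤ 0 + ((n : ℕ) : WithBot ℕ) := by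
            refine add_le_add degree_C_le (le_of_eq ?_)
            rw [degree_eq_natDegree ih.1.1.ne_zero, ih.1.2]
        _ = ((n : ℕ) : WithBot ℕ) := zero_add _
        _ < ((n + 2 : ℕ) : WithBot ℕ) := by exact_mod_cast (by omega : n < n + 2)
    have hm : (Qseq c (n + 1 + 1)).Monic := hp.add_of_left hlt
    refine ⟨hm, ?_⟩
    have hdeg : (Qseq c (n + 1 + 1)).degree = ((n + 2 : ℕ) : WithBot ℕ) := by
      show (X * Qseq c (n + 1) + C (c (n + 1)) * Qseq c n).degree = _
      rw [degree_add_eq_left_of_degree_lt hlt, hpdeg]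
    exact natDegree_eq_of_degree_eq_some hdeg

lemma Qseq_parity (c : ℕ → ℤ) (n : ℕ) :
    ∃ Sp Tp : Polynomial ℤ,
      Qseq c (2 * n) = Sp.comp (X ^ 2) ∧ Qseq c (2 * n + 1) = X * Tp.comp (X ^ 2) := by
  induction n with
  | zero =>
    refine ⟨1, 1, ?_, ?_⟩
    · show (1 : Polynomial ℤ) = (1 : Polynomial ℤ).comp (X ^ 2); simp
    · show (X : Polynomial ℤ) = X * (1 : Polynomial ℤ).comp (X ^ 2); simp
  | succ n ih =>
    obtain ⟨Sp, Tp, h1, h2⟩ := ih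
    refine ⟨X * Tp + C (c (2 * n + 1)) * Sp,
           (X * Tp + C (c (2 * n + 1)) * Sp) + C (c (2 * n + 2)) * Tp, ?_, ?_⟩
    · have e : 2 * (n + 1) = (2 * n) + 2 := by ring
      rw [e]
      show X * Qseq c (2 * n + 1) + C (c (2 * n + 1)) * Qseq c (2 * n) = _
      rw [h1, h2, add_comp, mul_comp, mul_comp, X_comp, C_comp]
      ring
    · have e : 2 * (n + 1) + 1 = (2 * n + 1) + 2 := by ring
      rw [e]
      show X * Qseq c (2 * n + 1 + 1) + C (c (2 * n + 1 + 1)) * Qseq c (2 * n + 1) = _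
      have e2 : Qseq c (2 * n + 1 + 1) = X * Qseq c (2 * n + 1 - 1 + 1) + C (c (2 * n + 1)) * Qseq c (2 * n) := by
        show Qseq c (2 * n + 2) = _
        norm_num
        rfl
      rw [show (2 * n + 1 + 1) = 2 * n + 2 from rfl]
      show X * Qseq c (2 * n + 2) + C (c (2 * n + 2)) * Qseq c (2 * n + 1) = _
      rw [show Qseq c (2 * n + 2) = X * Qseq c (2 * n + 1) + C (c (2 * n + 1)) * Qseq c (2 * n) from rfl,
        h1, h2, add_comp, add_comp, mul_comp, mul_comp, mul_comp, X_comp, C_comp, C_comp]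
      ring

lemma Qseq_mod2 (c : ℕ → ℤ) (hc : ∀ n, ((c n : ℤ) : ZMod 2) = 1) (n : ℕ) :
    (Qseq c (2 * n)).map (Int.castRingHom (ZMod 2)) = Hs n ^ 2 ∧
      (Qseq c (2 * n + 1)).map (Int.castRingHom (ZMod 2)) = Hs n * Hs (n + 1) + 1 := by
  induction n with
  | zero =>
    constructor
    · show (1 : Polynomial ℤ).map (Int.castRingHom (ZMod 2)) = Hs 0 ^ 2
      show (1 : Polynomial ℤ).map (Int.castRingHom (ZMod 2)) = (1 : Polynomial (ZMod 2)) ^ 2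
      simp
    · show (X : Polynomial ℤ).map (Int.castRingHom (ZMod 2)) = Hs 0 * Hs 1 + 1
      show (X : Polynomial ℤ).map (Int.castRingHom (ZMod 2)) = 1 * (X + 1) + 1
      rw [Polynomial.map_X]
      linear_combination (-1 : Polynomial (ZMod 2)) * two_poly
  | succ n ih =>
    have hCmap : ∀ m, (C (c m)).map (Int.castRingHom (ZMod 2)) = 1 := by
      intro m; rw [map_C]; rw [show (Int.castRingHom (ZMod 2)) (c m) = 1 from hc m, C_1]
    have hA : (Qseq c (2 * n + 2)).map (Int.castRingHom (ZMod 2)) = Hs (n + 1) ^ 2 := by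
      rw [show Qseq c (2 * n + 2) = X * Qseq c (2 * n + 1) + C (c (2 * n + 1)) * Qseq c (2 * n) from rfl]
      rw [Polynomial.map_add, Polynomial.map_mul, Polynomial.map_mul, Polynomial.map_X,
        hCmap, ih.1, ih.2]
      have e2 : Hs (n + 1) = X * Hs n + Hs (n - 1 + 1) ∨ True := Or.inr trivial
      have cont := Hs_cont n
      have hdef : Hs (n + 2) = X * Hs (n + 1) + Hs n := rfl
      linear_combination cont - Hs n * hdef + (X - Hs (n + 1) ^ 2) * two_poly
    constructor
    · rw [show 2 * (n + 1) = 2 * n + 2 by ring]; exact hA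
    · rw [show 2 * (n + 1) + 1 = (2 * n + 2) + 1 by ring]
      rw [show Qseq c (2 * n + 2 + 1) = X * Qseq c (2 * n + 2) + C (c (2 * n + 2)) * Qseq c (2 * n + 1) from rfl]
      rw [Polynomial.map_add, Polynomial.map_mul, Polynomial.map_mul, Polynomial.map_X,
        hCmap, hA, ih.2]
      have hdef : Hs (n + 2) = X * Hs (n + 1) + Hs n := rfl
      linear_combination (-(Hs (n + 1))) * hdef

/-- If a monic integer polynomial has squarefree reduction mod 2,
then its image over `ℚ` is squarefree. -/
lemma descent {S : Polynomial ℤ} (hS : S.Monic)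
    (hsf : Squarefree (S.map (Int.castRingHom (ZMod 2)))) :
    Squarefree (S.map (algebraMap ℤ ℚ)) := by
  intro x hx
  by_contra hxu
  have hmapne : S.map (algebraMap ℤ ℚ) ≠ 0 := (hS.map _).ne_zero
  have hx0 : x ≠ 0 := by
    rintro rfl
    rw [mul_zero, zero_dvd_iff] at hx
    exact hmapne hx
  set u : Polynomial ℚ := C (x.leadingCoeff)⁻¹ with hu_def
  have hlc : x.leadingCoeff ≠ 0 := leadingCoeff_ne_zero.mpr hx0
  have hu : IsUnit u := isUnit_C.mpr (isUnit_iff_ne_zero.mpr (inv_ne_zero hlc))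
  have hg1m : (x * u).Monic := monic_mul_leadingCoeff_inv hx0
  have hdvd1 : (x * u) * (x * u) ∣ S.map (algebraMap ℤ ℚ) := by
    have : (x * u) * (x * u) = (x * x) * (u * u) := by ring
    rw [this, (hu.mul hu).mul_right_dvd]
    exact hx
  obtain ⟨s, hs⟩ := IsIntegrallyClosed.eq_map_mul_C_of_dvd (K := ℚ) hS
    (dvd_trans (dvd_mul_right _ _) hdvd1)
  rw [hg1m.leadingCoeff, C_1, mul_one] at hs
  have hsm : s.Monic := by
    have h1 : (s.map (algebraMap ℤ ℚ)).Monic := hs ▸ hg1m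
    exact ((algebraMap ℤ ℚ).injective_int.monic_map_iff).mpr h1
  have hdvd2 : s * s ∣ S := by
    refine hS.dvd_of_fraction_map_dvd_fraction_map (K := ℚ) (hsm.mul hsm) ?_
    rw [Polynomial.map_mul, hs]
    exact hdvd1
  have hunit2 : IsUnit (s.map (Int.castRingHom (ZMod 2))) := by
    refine hsf _ ?_
    rw [← Polynomial.map_mul]
    exact Polynomial.map_dvd _ hdvd2
  -- contradiction via degrees
  have hxdeg : x.natDegree ≠ 0 := by
    intro h0
    apply hxu
    rw [isUnit_iff_degree_eq_zero]
    rw [degree_eq_natDegree hx0, h0]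
    rfl
  have hd1 : (s.map (Int.castRingHom (ZMod 2))).natDegree = s.natDegree :=
    hsm.natDegree_map _
  have hd2 : s.natDegree = x.natDegree := by
    have : (s.map (algebraMap ℤ ℚ)).natDegree = s.natDegree := hsm.natDegree_map _
    rw [hs] at this
    rw [← this, hu_def, natDegree_mul_C_eq_of_mul_eq_one (inv_mul_cancel₀ hlc)]
  have := natDegree_eq_zero_of_isUnit hunit2
  rw [hd1, hd2] at this
  exact hxdeg this

/-- with `ε_n = (-1)^⌊ns/r⌋` for `r, s` odd coprime, `0 < s < r`, and `P_n`
defined by `P_{n+1} = X P_n + ε_n ε_{n+1} P_{n-1}`, `P_0 = 1`, `P_1 = X` over `ℚ`,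
the polynomial `P_{r-1}` is squarefree (has simple roots). -/
theorem stmt11 (r s : ℕ) (hr : Odd r) (hs : Odd s) (hco : Nat.Coprime s r)
    (hs0 : 0 < s) (hsr : s < r)
    (ε : ℕ → ℤ) (hεdef : ∀ n, ε n = (-1) ^ ((n * s) / r))
    (P : ℕ → Polynomial ℚ) (hP0 : P 0 = 1) (hP1 : P 1 = X)
    (hrec : ∀ n, 1 ≤ n →
      P (n + 1) = X * P n + C ((ε n * ε (n + 1) : ℤ) : ℚ) * P (n - 1)) :
    Squarefree (P (r - 1)) := by
  set c : ℕ → ℤ := fun n => ε n * ε (n + 1) with hc_def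
  -- the c n are odd
  have hc : ∀ n, ((c n : ℤ) : ZMod 2) = 1 := by
    intro n
    simp only [hc_def, hεdef]
    push_cast
    rw [show ((-1 : ZMod 2)) = 1 by decide]
    simp
  -- P n is the rational image of Qseq c n
  have hPQ : ∀ n, P n = (Qseq c n).map (algebraMap ℤ ℚ) ∧
      P (n + 1) = (Qseq c (n + 1)).map (algebraMap ℤ ℚ) := by
    intro n
    induction n with
    | zero =>
      constructor
      · show P 0 = (1 : Polynomial ℤ).map (algebraMap ℤ ℚ); rw [hP0]; simp
      · show P 1 = (X : Polynomial ℤ).map (algebraMap ℤ ℚ); rw [hP1]; simp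
    | succ n ih =>
      refine ⟨ih.2, ?_⟩
      have h := hrec (n + 1) (by omega)
      rw [show n + 1 - 1 = n from rfl] at h
      rw [h, ih.1, ih.2]
      rw [show Qseq c (n + 1 + 1) = X * Qseq c (n + 1) + C (c (n + 1)) * Qseq c n from rfl]
      rw [Polynomial.map_add, Polynomial.map_mul, Polynomial.map_mul, Polynomial.map_X, map_C]
      rw [show (algebraMap ℤ ℚ) (c (n + 1)) = ((c (n + 1) : ℤ) : ℚ) from rfl]
  obtain ⟨m, hm⟩ := hr
  have hr1 : r - 1 = 2 * m := by omega
  obtain ⟨Sp, Tp, hSp, -⟩ := Qseq_parity c m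
  -- the mod 2 reduction of Sp is Hs m
  have hmap2 : Sp.map (Int.castRingHom (ZMod 2)) = Hs m := by
    apply expand_injective (R := ZMod 2) (n := 2) (by omega)
    rw [expand_eq_comp_X_pow, expand_eq_comp_X_pow, ← (Hs_sq m).1]
    calc (Sp.map (Int.castRingHom (ZMod 2))).comp (X ^ 2)
        = (Sp.comp (X ^ 2)).map (Int.castRingHom (ZMod 2)) := by
          rw [map_comp]; simp
      _ = (Qseq c (2 * m)).map (Int.castRingHom (ZMod 2)) := by rw [← hSp]
      _ = Hs m ^ 2 := (Qseq_mod2 c hc m).1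
  -- Sp is monic
  have hSpm : Sp.Monic := by
    have hQm : (Qseq c (2 * m)).Monic := (Qseq_monic c (2 * m)).1.1
    rw [hSp] at hQm
    have h2 : (X ^ 2 : Polynomial ℤ).natDegree ≠ 0 := by simp
    have := leadingCoeff_comp (p := Sp) h2
    rw [Monic, this] at hQm
    rwa [leadingCoeff_X_pow, one_pow, mul_one] at hQm
  -- squarefree mod 2
  have hsf2 : Squarefree (Sp.map (Int.castRingHom (ZMod 2))) := by
    rw [hmap2]; exact (Hs_sep m).squarefree
  have hsfQ : Squarefree (Sp.map (algebraMap ℤ ℚ)) := descent hSpm hsf2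
  -- nonzero constant coefficient
  have hcoeff : ((Sp.coeff 0 : ℤ) : ℚ) ≠ 0 := by
    have h1 : ((Sp.coeff 0 : ℤ) : ZMod 2) = 1 := by
      have := congrArg (fun p => coeff p 0) hmap2
      simpa [coeff_map, (Hs_coeff0 m).1] using this
    have : (Sp.coeff 0 : ℤ) ≠ 0 := by
      intro h0; rw [h0] at h1; simpa using h1
    exact_mod_cast this
  -- rewrite the goal
  have hPr : P (r - 1) = (Sp.map (algebraMap ℤ ℚ)).comp (X ^ 2) := by
    rw [hr1, (hPQ (2 * m)).1, hSp, map_comp]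
    simp
  rw [hPr]
  set g : Polynomial ℚ := Sp.map (algebraMap ℤ ℚ) with hg_def
  have hsep : g.Separable := (PerfectField.separable_iff_squarefree).mpr hsfQ
  apply Separable.squarefree
  rw [Separable, derivative_comp]
  have hd : derivative (X ^ 2 : Polynomial ℚ) = C 2 * X := by
    rw [derivative_X_pow]; norm_num
  rw [hd]
  have hcoeffg : (g.comp (X ^ 2)).coeff 0 ≠ 0 := by
    rw [coeff_zero_eq_eval_zero, eval_comp]
    simpa [hg_def, coeff_zero_eq_eval_zero] using hcoeff
  have hX : IsCoprime (g.comp (X ^ 2)) (X : Polynomial ℚ) :=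
    ((irreducible_X.coprime_iff_not_dvd).mpr (by rw [X_dvd_iff]; exact hcoeffg)).symm
  have h2u : IsCoprime (g.comp (X ^ 2)) (C (2 : ℚ)) :=
    ⟨0, C (2 : ℚ)⁻¹, by rw [zero_mul, zero_add, ← C_mul]; norm_num⟩
  have hB : IsCoprime (g.comp (X ^ 2)) ((derivative g).comp (X ^ 2)) := by
    have := IsCoprime.map hsep (eval₂RingHom (C : ℚ →+* Polynomial ℚ) (X ^ 2 : Polynomial ℚ))
    simpa [coe_eval₂RingHom, Polynomial.comp] using this
  exact (h2u.mul_right hX).mul_right hB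
end

section
/- Let V be a finite-dimensional commutative ℚ-algebra with a linear form ε: V → ℚ such that η(x,y) = ε(xy) is non-degenerate, and suppose V is semisimple (the trace form (x,y) ↦ tr_V(xy) is non-degenerate, where tr_V(x) is the trace of multiplication by x). Then there exists a unique invertible α ∈ V with ε(x) = tr_V(αx) for all x, and the element Ω = ∑ x_i y_i, where η^{-1} = ∑ x_i ⊗ y_i ∈ V ⊗ V, satisfies Ω = α^{-1}. -/
section aux

variable {V : Type*} [CommRing V] [Algebra ℚ V] [FiniteDimensional ℚ V]

lemma trace_rat (h : ℚ →ₗ[ℚ] ℚ) : LinearMap.trace ℚ ℚ h = h 1 := by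
  have : h = h 1 • LinearMap.id := by
    ext; simp [mul_comm]
  rw [this]
  simp [LinearMap.trace_id]

lemma trace_mulLeft_eq (ε : V →ₗ[ℚ] ℚ) {ι : Type*} [Fintype ι] (x y : ι → V)
    (hinv : ∀ a : V, ∑ i, ε (a * x i) • y i = a) (v : V) :
    LinearMap.trace ℚ V (LinearMap.mulLeft ℚ v) = ∑ i, ε (v * y i * x i) := by
  have hdecomp : LinearMap.mulLeft ℚ v
      = ∑ i, (LinearMap.toSpanSingleton ℚ V (v * y i)).comp
          (ε.comp (LinearMap.mulLeft ℚ (x i))) := by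
    ext a
    simp only [LinearMap.mulLeft_apply, LinearMap.sum_apply, LinearMap.comp_apply,
      LinearMap.toSpanSingleton_apply]
    conv_lhs => rw [← hinv a]
    rw [Finset.mul_sum]
    refine Finset.sum_congr rfl fun i _ => ?_
    rw [mul_comm (x i) a, mul_smul_comm]
  rw [hdecomp, map_sum]
  refine Finset.sum_congr rfl fun i _ => ?_
  rw [LinearMap.trace_comp_comm']
  rw [trace_rat]
  simp only [LinearMap.comp_apply, LinearMap.toSpanSingleton_apply, one_smul,
    LinearMap.mulLeft_apply]
  rw [mul_comm (x i) (v * y i)]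

end aux

/-- let `V` be a finite-dimensional commutative `ℚ`-algebra with a linear
form `ε` such that `η(x,y) = ε(xy)` is non-degenerate, and suppose `V` is semisimple
(the trace form is non-degenerate). Then there is a unique invertible `α ∈ V` with
`ε(x) = tr_V(αx)` for all `x`, and the element `Ω = ∑ xᵢ yᵢ` (where `∑ xᵢ ⊗ yᵢ` is the
inverse tensor of `η`, encoded by the reproducing property `∑ ε(a xᵢ) yᵢ = a`) satisfies
`Ω = α⁻¹`, i.e. `Ω α = 1`. -/
theorem stmt12 (V : Type*) [CommRing V] [Algebra ℚ V] [FiniteDimensional ℚ V]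
    (ε : V →ₗ[ℚ] ℚ) (hnd : ∀ v : V, (∀ w : V, ε (v * w) = 0) → v = 0)
    (hss : ∀ v : V,
      (∀ w : V, LinearMap.trace ℚ V (LinearMap.mulLeft ℚ (v * w)) = 0) → v = 0)
    (ι : Type*) [Fintype ι] (x y : ι → V)
    (hinv : ∀ a : V, ∑ i, ε (a * x i) • y i = a) :
    (∃! α : V, IsUnit α ∧
        ∀ v : V, ε v = LinearMap.trace ℚ V (LinearMap.mulLeft ℚ (α * v))) ∧
      ∀ α : V, (IsUnit α ∧
          ∀ v : V, ε v = LinearMap.trace ℚ V (LinearMap.mulLeft ℚ (α * v))) →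
        (∑ i, x i * y i) * α = 1 := by
  classical
  have hml : ∀ u : V, LinearMap.mulLeft ℚ u = LinearMap.mul ℚ V u := fun u => by
    ext w; simp
  set B : V →ₗ[ℚ] Module.Dual ℚ V :=
    (LinearMap.mul ℚ V).compr₂ ((LinearMap.trace ℚ V).comp (LinearMap.mul ℚ V)) with hBdef
  have hBapp : ∀ v w : V, B v w = LinearMap.trace ℚ V (LinearMap.mulLeft ℚ (v * w)) := by
    intro v w
    simp [hBdef, LinearMap.compr₂_apply, hml]
  have hBinj : Function.Injective B := by
    rw [injective_iff_map_eq_zero]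
    intro v hv
    refine hss v fun w => ?_
    rw [← hBapp, hv]; rfl
  have hBsurj : Function.Surjective B := by
    refine (LinearMap.injective_iff_surjective_of_finrank_eq_finrank ?_).mp hBinj
    exact (Subspace.dual_finrank_eq).symm
  obtain ⟨α, hα⟩ := hBsurj ε
  have hαprop : ∀ v : V, ε v = LinearMap.trace ℚ V (LinearMap.mulLeft ℚ (α * v)) := by
    intro v; rw [← hBapp, hα]
  -- α is a unit
  have hαunit : IsUnit α := by
    have hinj : Function.Injective (LinearMap.mulLeft ℚ α) := by
      rw [← LinearMap.ker_eq_bot, LinearMap.ker_eq_bot']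
      intro b hb
      refine hnd b fun w => ?_
      have h1 : α * (b * w) = 0 := by
        have : α * b = 0 := hb
        rw [← mul_assoc, this, zero_mul]
      rw [hαprop (b * w), h1]
      simp
    have hsurj : Function.Surjective (LinearMap.mulLeft ℚ α) :=
      (LinearMap.injective_iff_surjective).mp hinj
    obtain ⟨c, hc⟩ := hsurj 1
    exact IsUnit.of_mul_eq_one (a := α) c hc
  -- uniqueness
  have huniq : ∀ α' : V, (IsUnit α' ∧
      ∀ v : V, ε v = LinearMap.trace ℚ V (LinearMap.mulLeft ℚ (α' * v))) → α' = α := by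
    intro α' ⟨_, h⟩
    refine hBinj ?_
    ext w
    rw [hBapp, hBapp, ← h w, ← hαprop w]
  refine ⟨⟨α, ⟨hαunit, hαprop⟩, huniq⟩, ?_⟩
  intro β ⟨hβu, hβ⟩
  -- key trace computation
  have key : ∀ v : V, LinearMap.trace ℚ V (LinearMap.mulLeft ℚ v) = ε (v * ∑ i, y i * x i) :=
    fun v => by
      rw [trace_mulLeft_eq ε x y hinv v, Finset.mul_sum, map_sum]
      exact Finset.sum_congr rfl fun i _ => by rw [mul_assoc]
  have hβΩ : ∀ v : V, ε v = ε (v * ((∑ i, x i * y i) * β)) := by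
    intro v
    rw [hβ v, key (β * v)]
    congr 1
    rw [Finset.sum_congr rfl fun i (_ : i ∈ Finset.univ) => mul_comm (x i) (y i)]
    ring
  have : (∑ i, x i * y i) * β - 1 = 0 := by
    refine hnd _ fun w => ?_
    rw [sub_mul, one_mul, map_sub, mul_comm _ w, ← hβΩ w, sub_self]
  exact sub_eq_zero.mp this
end

section
/- Let V_q be the Frobenius algebra with ℚ-basis e_0,…,e_{r-2}, pairing η(e_i,e_j) = δ_{ij}(-1)^i ε_{i+1}, and multiplication determined by ω(x,y,z) = η(xy,z) with ω(e_i,e_j,e_k) = sign⟨i,j,k⟩ for r-admissible triples. Setting ι = e_{r-2}, one has ι·e_n = (-1)^n ε_{n+1} e_{r-2-n} for all 0 ≤ n ≤ r-2, and in particular ι² = -1. -/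
open Finset

attribute [local instance] Classical.propDecidable

/-- The quantum integer `[n] = sin(πns/r)/sin(πs/r)` for `q = exp(iπs/r)`. -/
noncomputable def qint (r s n : ℕ) : ℝ :=
  Real.sin (Real.pi * n * s / r) / Real.sin (Real.pi * s / r)

/-- The quantum factorial `[n]! = [n][n-1]⋯[1]`. -/
noncomputable def qfact (r s n : ℕ) : ℝ := ∏ m ∈ Finset.Icc 1 n, qint r s m

/-- `(i,j,k)` is `r`-admissible: triangle inequalities, `i+j+k` even, `i+j+k ≤ 2r-4`. -/
def rAdmissible (r i j k : ℕ) : Prop :=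
  i ≤ j + k ∧ j ≤ i + k ∧ k ≤ i + j ∧ Even (i + j + k) ∧ i + j + k ≤ 2 * r - 4

/-- `⟨i,j,k⟩ = (-1)^{a+b+c} [a+b+c+1]![a]![b]![c]! / ([a+b]![a+c]![b+c]!)` where
`i = b+c`, `j = a+c`, `k = a+b`. -/
noncomputable def qbracket (r s i j k : ℕ) : ℝ :=
  let a := (j + k - i) / 2
  let b := (i + k - j) / 2
  let c := (i + j - k) / 2
  (-1 : ℝ) ^ (a + b + c) * qfact r s (a + b + c + 1) * qfact r s a * qfact r s b *
      qfact r s c / (qfact r s (a + b) * qfact r s (a + c) * qfact r s (b + c))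

/-- The sign of a real number, valued in `ℚ`. -/
noncomputable def rsign (x : ℝ) : ℚ := if 0 < x then 1 else if x < 0 then -1 else 0

lemma sinden_pos {r s : ℕ} (hs0 : 0 < s) (hsr : s < r) :
    0 < Real.sin (Real.pi * s / r) := by
  have hrn : 0 < r := lt_of_le_of_lt (Nat.zero_le s) hsr
  have hr0 : (0:ℝ) < r := by exact_mod_cast hrn
  have hπ := Real.pi_pos
  apply Real.sin_pos_of_pos_of_lt_pi
  · positivity
  · rw [div_lt_iff₀ hr0]
    have : (s:ℝ) < r := by exact_mod_cast hsr
    nlinarith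

lemma sinnum_ne {r s m : ℕ} (hco : Nat.Coprime s r) (hm : 0 < m) (hmr : m < r) :
    Real.sin (Real.pi * m * s / r) ≠ 0 := by
  have hrn : 0 < r := lt_of_le_of_lt (Nat.zero_le m) hmr
  have hr0 : (0:ℝ) < r := by exact_mod_cast hrn
  have hπ := Real.pi_pos
  intro h
  rw [Real.sin_eq_zero_iff] at h
  obtain ⟨n, hn⟩ := h
  have h2 : ((m * s : ℕ) : ℝ) = ((n * r : ℤ) : ℝ) := by
    push_cast
    field_simp at hn
    nlinarith [hn]
  have h3 : ((m * s : ℕ) : ℤ) = n * r := by exact_mod_cast h2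
  have h4 : (r : ℤ) ∣ (m * s : ℕ) := ⟨n, by linarith [h3, mul_comm n (r:ℤ)]⟩
  have h5 : r ∣ m * s := by exact_mod_cast h4
  have h6 : r ∣ m := (Nat.Coprime.dvd_of_dvd_mul_right hco.symm) h5
  exact absurd (Nat.le_of_dvd hm h6) (by omega)

lemma qint_ne {r s m : ℕ} (hco : Nat.Coprime s r) (hs0 : 0 < s) (hsr : s < r)
    (hm : 0 < m) (hmr : m < r) : qint r s m ≠ 0 :=
  div_ne_zero (sinnum_ne hco hm hmr) (ne_of_gt (sinden_pos hs0 hsr))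

lemma qfact_ne {r s m : ℕ} (hco : Nat.Coprime s r) (hs0 : 0 < s) (hsr : s < r)
    (hmr : m < r) : qfact r s m ≠ 0 := by
  apply Finset.prod_ne_zero_iff.mpr
  intro x hx
  rw [Finset.mem_Icc] at hx
  exact qint_ne hco hs0 hsr (by omega) (by omega)

lemma qint_one {r s : ℕ} (hs0 : 0 < s) (hsr : s < r) : qint r s 1 = 1 := by
  unfold qint
  rw [show Real.pi * (1:ℕ) * s / r = Real.pi * s / r by push_cast; ring]
  exact div_self (ne_of_gt (sinden_pos hs0 hsr))

lemma qint_sub {r s m : ℕ} (hs : Odd s) (hm : 0 < m) (hmr : m ≤ r) (hr0 : 0 < r) :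
    qint r s (r - m) = qint r s m := by
  obtain ⟨t, ht⟩ := hs
  unfold qint
  congr 1
  have hrr : (0:ℝ) < r := by positivity
  have hcast : ((r - m : ℕ) : ℝ) = (r:ℝ) - m := by
    push_cast [Nat.cast_sub hmr]; ring
  rw [hcast]
  have hsR : (s:ℝ) = 2 * t + 1 := by exact_mod_cast ht
  have heq : Real.pi * ((r:ℝ) - m) * s / r
      = (Real.pi - Real.pi * m * s / r) + (t:ℕ) * (2 * Real.pi) := by
    rw [hsR]
    field_simp
    ring
  rw [heq, Real.sin_add_nat_mul_two_pi, Real.sin_pi_sub]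

lemma rsign_sq {x : ℝ} (hx : x ≠ 0) : rsign x * rsign x = 1 := by
  rcases lt_trichotomy x 0 with h | h | h
  · simp [rsign, h, not_lt.mpr h.le]
  · exact absurd h hx
  · simp [rsign, h]

lemma rsign_neg_one : rsign (-1) = -1 := by norm_num [rsign]

lemma adm_iff {r n k : ℕ} (hr3 : 3 ≤ r) (hn : n ≤ r - 2) (hk : k ≤ r - 2) :
    rAdmissible r (r - 2) n k ↔ n + k = r - 2 := by
  simp only [rAdmissible, Nat.even_iff]
  omega

lemma qbr_eval {r s n : ℕ} (hr : Odd r) (hs : Odd s) (hco : Nat.Coprime s r)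
    (hs0 : 0 < s) (hsr : s < r) (hr3 : 3 ≤ r) (hn : n ≤ r - 2) :
    qbracket r s (r - 2) n (r - 2 - n) = -1 := by
  have ha : (n + (r - 2 - n) - (r - 2)) / 2 = 0 := by omega
  have hb : (r - 2 + (r - 2 - n) - n) / 2 = r - 2 - n := by omega
  have hc : (r - 2 + n - (r - 2 - n)) / 2 = n := by omega
  unfold qbracket
  simp only [ha, hb, hc]
  have habc : 0 + (r - 2 - n) + n = r - 2 := by omega
  rw [habc]
  have h1 : r - 2 + 1 = (r - 2) + 1 := rfl
  have hfac : qfact r s (r - 2 + 1) = qfact r s (r - 2) * qint r s (r - 2 + 1) := by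
    unfold qfact
    exact Finset.prod_Icc_succ_top (by omega) _
  have hq1 : qint r s (r - 2 + 1) = 1 := by
    have : r - 2 + 1 = r - 1 := by omega
    rw [this, qint_sub hs (by omega) (by omega) (by omega), qint_one hs0 hsr]
  have h0 : qfact r s 0 = 1 := by simp [qfact]
  rw [hfac, hq1, h0]
  have hX := qfact_ne (m := r - 2 - n) hco hs0 hsr (by omega)
  have hY := qfact_ne (m := n) hco hs0 hsr (by omega)
  have hZ := qfact_ne (m := r - 2) hco hs0 hsr (by omega)
  have hodd : Odd (r - 2) := by
    obtain ⟨t, ht⟩ := hr; exact ⟨t - 1, by omega⟩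
  rw [hodd.neg_one_pow, Nat.sub_add_cancel hn]
  field_simp
  rw [Nat.zero_add, Nat.zero_add, div_self (mul_ne_zero hX hY)]
/-- in the Frobenius algebra `V_q` with basis `e_0, …, e_{r-2}`, pairing
`η(e_i, e_j) = δ_{ij} (-1)^i ε_{i+1}` and multiplication determined (via the
non-degenerate pairing) by `η(e_i e_j, e_k) = sign⟨i,j,k⟩` for `r`-admissible triples
(`0` otherwise), the element `ι = e_{r-2}` satisfies `ι e_n = (-1)^n ε_{n+1} e_{r-2-n}`
for all `0 ≤ n ≤ r-2`, and in particular `ι² = -1`. -/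
theorem stmt14 (r s : ℕ) (hr : Odd r) (hs : Odd s) (hco : Nat.Coprime s r)
    (hs0 : 0 < s) (hsr : s < r) (hr3 : 3 ≤ r)
    (ε : ℕ → ℚ) (hε : ∀ n, ε n = rsign (qint r s n))
    (V : Type*) [CommRing V] [Algebra ℚ V]
    (e : ℕ → V) (he0 : e 0 = 1)
    (η : V →ₗ[ℚ] V →ₗ[ℚ] ℚ)
    (hη : ∀ i ≤ r - 2, ∀ j ≤ r - 2,
      η (e i) (e j) = if i = j then (-1) ^ i * ε (i + 1) else 0)
    (hω : ∀ i ≤ r - 2, ∀ j ≤ r - 2, ∀ k ≤ r - 2,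
      η (e i * e j) (e k) =
        if rAdmissible r i j k then rsign (qbracket r s i j k) else 0)
    (hnd : ∀ v : V, (∀ k ≤ r - 2, η v (e k) = 0) → v = 0) :
    (∀ n ≤ r - 2, e (r - 2) * e n = (((-1 : ℚ) ^ n * ε (n + 1))) • e (r - 2 - n)) ∧
      e (r - 2) * e (r - 2) = -1 := by
  have hodd : Odd (r - 2) := by
    obtain ⟨t, ht⟩ := hr; exact ⟨t - 1, by omega⟩
  have key : ∀ n ≤ r - 2, e (r - 2) * e n = (((-1:ℚ)^n * ε (n+1))) • e (r - 2 - n) := by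
    intro n hn
    have hsub : r - 2 - n ≤ r - 2 := by omega
    rw [← sub_eq_zero]
    apply hnd
    intro k hk
    rw [map_sub, LinearMap.sub_apply, map_smul, LinearMap.smul_apply]
    rw [hω (r-2) le_rfl n hn k hk, hη (r-2-n) hsub k hk]
    by_cases hkn : k = r - 2 - n
    · subst hkn
      rw [if_pos ((adm_iff hr3 hn hk).mpr (by omega)), if_pos rfl]
      rw [qbr_eval hr hs hco hs0 hsr hr3 hn, rsign_neg_one]
      have hεe : ε (r - 2 - n + 1) = ε (n + 1) := by
        rw [hε, hε]
        congr 1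
        have h1 : r - 2 - n + 1 = r - (n+1) := by omega
        rw [h1, qint_sub hs (by omega) (by omega) (by omega)]
      rw [hεe]
      have hεsq : ε (n+1) * ε (n+1) = 1 := by
        rw [hε]; exact rsign_sq (qint_ne hco hs0 hsr (by omega) (by omega))
      have hpow : ((-1:ℚ)^n) * ((-1:ℚ)^(r-2-n)) = -1 := by
        rw [← pow_add, show n + (r-2-n) = r-2 from by omega]
        exact hodd.neg_one_pow
      rw [smul_eq_mul]
      have hmm : ((-1:ℚ)^n * ε (n+1)) * ((-1:ℚ)^(r-2-n) * ε (n+1)) = -1 := by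
        rw [mul_mul_mul_comm, hpow, hεsq]; ring
      linarith [hmm]
    · rw [if_neg, if_neg (by omega : ¬ r-2-n = k)]
      · simp
      · rw [adm_iff hr3 hn hk]; omega
  refine ⟨key, ?_⟩
  rw [key (r-2) le_rfl, Nat.sub_self, he0]
  have hε1 : ε (r-2+1) = 1 := by
    rw [hε, show r-2+1 = r-(1:ℕ) from by omega,
      qint_sub hs one_pos (by omega) (by omega), qint_one hs0 hsr]
    norm_num [rsign]
  rw [hε1, hodd.neg_one_pow]
  norm_num
end

section
/- Let χ ∈ ℤ[t] be a monic polynomial whose complex roots all have strictly positive real part and whose roots sum to 1 (i.e., the coefficient of t^{deg-1} is -1). Then χ is irreducible over ℚ. -/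
open Polynomial

lemma aux17 (χ P : Polynomial ℤ) (hP : P.Monic) (hdvd : P ∣ χ)
    (hdeg : P.natDegree ≠ 0)
    (hroots : ∀ z : ℂ, Polynomial.aeval z χ = 0 → 0 < z.re) :
    P.nextCoeff ≤ -1 := by
  set Pc := P.map (Int.castRingHom ℂ) with hPc
  have hPcm : Pc.Monic := hP.map _
  have hdegPc : Pc.natDegree = P.natDegree := hP.natDegree_map _
  have hposall : ∀ z ∈ Pc.roots, (0:ℝ) < z.re := by
    intro z hz
    have hz' : Pc.IsRoot z := isRoot_of_mem_roots hz
    obtain ⟨Q, hQ⟩ := hdvd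
    apply hroots
    have halg : algebraMap ℤ ℂ = Int.castRingHom ℂ := RingHom.ext fun x => by simp
    have hmap : χ.map (Int.castRingHom ℂ) = Pc * Q.map (Int.castRingHom ℂ) := by
      rw [hPc, ← Polynomial.map_mul, ← hQ]
    rw [aeval_def, eval₂_eq_eval_map, halg, hmap, eval_mul, hz'.eq_zero, zero_mul]
  obtain ⟨z0, hz0⟩ := Complex.exists_root (f := Pc)
    (natDegree_pos_iff_degree_pos.mp (by rw [hdegPc]; exact Nat.pos_of_ne_zero hdeg))
  have hz0mem : z0 ∈ Pc.roots := (mem_roots hPcm.ne_zero).2 hz0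
  obtain ⟨t, ht⟩ := Multiset.exists_cons_of_mem hz0mem
  have hsumpos : (0:ℝ) < (Pc.roots.map Complex.re).sum := by
    rw [ht, Multiset.map_cons, Multiset.sum_cons]
    have htnn : (0:ℝ) ≤ (t.map Complex.re).sum := by
      apply Multiset.sum_nonneg
      intro x hx
      obtain ⟨z, hz, rfl⟩ := Multiset.mem_map.1 hx
      exact le_of_lt (hposall z (by rw [ht]; exact Multiset.mem_cons_of_mem hz))
    have := hposall z0 hz0mem
    linarith
  have hsum : (Pc.roots.map Complex.re).sum = (Pc.roots.sum).re :=
    (map_multiset_sum Complex.reAddGroupHom Pc.roots).symm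
  have hnext : Pc.nextCoeff = -Pc.roots.sum :=
    (IsAlgClosed.splits Pc).nextCoeff_eq_neg_sum_roots_of_monic hPcm
  have hnextmap : Pc.nextCoeff = (P.nextCoeff : ℂ) :=
    nextCoeff_map Int.cast_injective P
  have hlt : (0:ℝ) < -(P.nextCoeff : ℝ) := by
    rw [hsum] at hsumpos
    have heq : Pc.roots.sum = -(P.nextCoeff : ℂ) := by
      rw [← neg_eq_iff_eq_neg, ← hnext, hnextmap]
    rw [heq] at hsumpos
    simpa using hsumpos
  have : (P.nextCoeff : ℝ) < 0 := by linarith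
  have : P.nextCoeff < 0 := by exact_mod_cast this
  omega

/-- a monic integer polynomial whose complex roots all have strictly
positive real part and whose roots sum to `1` (i.e. the subleading coefficient is `-1`)
is irreducible over `ℚ`. -/
theorem stmt17 (χ : Polynomial ℤ) (hmonic : χ.Monic)
    (hroots : ∀ z : ℂ, Polynomial.aeval z χ = 0 → 0 < z.re)
    (hcoeff : χ.coeff (χ.natDegree - 1) = -1) :
    Irreducible (χ.map (Int.castRingHom ℚ)) := by
  have hnd : χ.natDegree ≠ 0 := by
    intro h
    rw [h] at hcoeff
    simp only [Nat.zero_sub] at hcoeff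
    have := hmonic.coeff_natDegree
    rw [h] at this
    omega
  have hnext : χ.nextCoeff = -1 := by
    rw [nextCoeff_of_natDegree_pos (Nat.pos_of_ne_zero hnd), hcoeff]
  have key : Irreducible χ := by
    constructor
    · exact fun hu => hnd (natDegree_eq_zero_of_isUnit hu)
    · intro a b hab
      by_contra hcon
      push_neg at hcon
      obtain ⟨hua, hub⟩ := hcon
      have hlc : a.leadingCoeff * b.leadingCoeff = 1 := by
        have := hmonic.leadingCoeff
        rw [hab, leadingCoeff_mul] at this
        exact this
      set u := a.leadingCoeff with hu
      have hu1 : u = 1 ∨ u = -1 := Int.isUnit_iff.mp (IsUnit.of_mul_eq_one _ hlc)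
      have huu : u * u = 1 := by rcases hu1 with h | h <;> rw [h] <;> ring
      have hlb : b.leadingCoeff = u := by
        rcases hu1 with h | h <;> rw [h] at hlc ⊢ <;> linarith
      set P := C u * a with hPdef
      set Q := C u * b with hQdef
      have hPm : P.Monic := by
        rw [Monic, hPdef, leadingCoeff_mul, leadingCoeff_C, ← hu, huu]
      have hQm : Q.Monic := by
        rw [Monic, hQdef, leadingCoeff_mul, leadingCoeff_C, hlb, huu]
      have hPQ : χ = P * Q := by
        have h1 : C u * a * (C u * b) = C u * C u * (a * b) := by ring
        rw [hPdef, hQdef, h1, ← C_mul, huu, C_1, one_mul, hab]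
      have hPd : P.natDegree ≠ 0 := by
        intro h
        have h1 : P = 1 := hPm.natDegree_eq_zero.mp h
        exact hua (isUnit_of_dvd_one ⟨C u, by rw [mul_comm, ← hPdef, h1]⟩)
      have hQd : Q.natDegree ≠ 0 := by
        intro h
        have h1 : Q = 1 := hQm.natDegree_eq_zero.mp h
        exact hub (isUnit_of_dvd_one ⟨C u, by rw [mul_comm, ← hQdef, h1]⟩)
      have h1 := aux17 χ P hPm ⟨Q, hPQ⟩ hPd hroots
      have h2 := aux17 χ Q hQm ⟨P, by rw [hPQ]; ring⟩ hQd hroots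
      have hsum := hPm.nextCoeff_mul hQm
      rw [← hPQ, hnext] at hsum
      omega
  rw [show Int.castRingHom ℚ = algebraMap ℤ ℚ from rfl]
  exact hmonic.irreducible_iff_irreducible_map_fraction_map.mp key
end
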